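/- Let X be an n-dimensional Banach space (n ∈ ℕ). Then the identity operator id: X → X is nuclear and its nuclear norm equals the dimension: ν(id_X) = n. -/

import Mathlib

/-- A nuclear representation of a bounded linear operator `T : X → Y`:
functionals `a k` in the dual of `X` and elements `y k` of `Y` with
`∑ ‖a k‖ ‖y k‖ < ∞` and `T x = ∑ (a k x) • y k` for all `x`. -/
def IsNuclearRep {X Y : Type*} [NormedAddCommGroup X] [NormedSpace ℂ X]
    [NormedAddCommGroup Y] [NormedSpace ℂ Y] (T : X →L[ℂ] Y)
    (a : ℕ → (X →L[ℂ] ℂ)) (y : ℕ → Y) : Prop :=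
  Summable (fun k => ‖a k‖ * ‖y k‖) ∧ ∀ x : X, HasSum (fun k => a k x • y k) (T x)

/-- `T` is nuclear if it admits a nuclear representation. -/
def IsNuclear {X Y : Type*} [NormedAddCommGroup X] [NormedSpace ℂ X]
    [NormedAddCommGroup Y] [NormedSpace ℂ Y] (T : X →L[ℂ] Y) : Prop :=
  ∃ a y, IsNuclearRep T a y

/-- The nuclear norm of `T`: the infimum of `∑ ‖a k‖ ‖y k‖` over all nuclear
representations of `T`. -/
noncomputable def nuclearNorm {X Y : Type*} [NormedAddCommGroup X] [NormedSpace ℂ X]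
    [NormedAddCommGroup Y] [NormedSpace ℂ Y] (T : X →L[ℂ] Y) : ℝ :=
  sInf {c : ℝ | ∃ a y, IsNuclearRep T a y ∧ c = ∑' k, ‖a k‖ * ‖y k‖}

/-- If `X` is an `n`-dimensional Banach space, then the identity operator
on `X` is nuclear, with nuclear norm equal to `n`. -/

lemma my_auerbach (X : Type*) [NormedAddCommGroup X] [NormedSpace ℂ X]
    [FiniteDimensional ℂ X] (n : ℕ) (hn : 0 < n) (hdim : Module.finrank ℂ X = n) :
    ∃ (e : Fin n → X) (a : Fin n → (X →L[ℂ] ℂ)), (∀ i, ‖e i‖ = 1) ∧ (∀ i, ‖a i‖ ≤ 1) ∧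
      ∀ x : X, ∑ i, a i x • e i = x := by
  classical
  have : Nontrivial X := by
    rw [← Module.finrank_pos_iff (R := ℂ)]; omega
  let B : Module.Basis (Fin n) ℂ X := Module.finBasisOfFinrankEq ℂ X hdim
  -- continuity of the determinant function
  have hc : Continuous fun v : Fin n → X => B.det v := by
    have h1 : ∀ v : Fin n → X, B.det v = Matrix.det (fun i j => B.repr (v j) i) := by
      intro v; rw [Module.Basis.det_apply]; rfl
    simp only [h1]
    exact Continuous.matrix_det (continuous_pi fun i => continuous_pi fun j =>
      (B.coord i).continuous_of_finiteDimensional.comp (continuous_apply j))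
  -- compact set of unit tuples
  set K : Set (Fin n → X) := Set.pi Set.univ (fun _ => Metric.sphere (0:X) 1) with hK
  have hKc : IsCompact K := isCompact_univ_pi fun _ => isCompact_sphere 0 1
  have hBne : ∀ i, ‖B i‖ ≠ 0 := fun i => norm_ne_zero_iff.mpr (B.ne_zero i)
  set v₀ : Fin n → X := fun i => (‖B i‖ : ℂ)⁻¹ • B i with hv₀
  have hv₀K : v₀ ∈ K := by
    intro i _
    simp only [hv₀, Metric.mem_sphere, dist_zero_right, norm_smul, norm_inv,
      Complex.norm_real, Real.norm_eq_abs, abs_norm]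
    rw [inv_mul_cancel₀ (hBne i)]
  have hv₀det : B.det v₀ ≠ 0 := by
    have : B.det v₀ = (∏ i, (‖B i‖ : ℂ)⁻¹) • B.det B :=
      B.det.toMultilinearMap.map_smul_univ _ _
    rw [this, B.det_self, smul_eq_mul, mul_one]
    exact Finset.prod_ne_zero_iff.mpr fun i _ =>
      inv_ne_zero (by exact_mod_cast hBne i)
  obtain ⟨e, heK, hmax⟩ := hKc.exists_isMaxOn ⟨v₀, hv₀K⟩ hc.norm.continuousOn
  set M := ‖B.det e‖ with hM
  have hMpos : 0 < M := lt_of_lt_of_le (norm_pos_iff.mpr hv₀det) (hmax hv₀K)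
  have hdetne : B.det e ≠ 0 := norm_pos_iff.mp hMpos
  have hesph : ∀ i, ‖e i‖ = 1 := by
    intro i
    have := heK i (Set.mem_univ i)
    simpa using this
  -- key bound
  have hbound : ∀ (i : Fin n) (x : X), ‖B.det (Function.update e i x)‖ ≤ ‖x‖ * M := by
    intro i x
    rcases eq_or_ne x 0 with rfl | hx
    · simp [AlternatingMap.map_update_zero]
    · have hxn : (‖x‖ : ℂ) ≠ 0 := by exact_mod_cast norm_ne_zero_iff.mpr hx
      set u : X := (‖x‖ : ℂ)⁻¹ • x with hu
      have hxu : x = (‖x‖ : ℂ) • u := by rw [hu, smul_smul, mul_inv_cancel₀ hxn, one_smul]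
      have hun : ‖u‖ = 1 := by
        rw [hu, norm_smul, norm_inv, Complex.norm_real, Real.norm_eq_abs, abs_norm,
          inv_mul_cancel₀ (norm_ne_zero_iff.mpr hx)]
      have huK : Function.update e i u ∈ K := by
        intro j _
        rcases eq_or_ne j i with rfl | hj
        · simp [Function.update_self, hun]
        · simp [Function.update_of_ne hj, hesph j]
      have : B.det (Function.update e i x) = (‖x‖ : ℂ) • B.det (Function.update e i u) := by
        conv_lhs => rw [hxu]
        rw [AlternatingMap.map_update_smul]
      rw [this, norm_smul, Complex.norm_real, Real.norm_eq_abs, abs_norm]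
      exact mul_le_mul_of_nonneg_left (hmax huK) (norm_nonneg x)
  -- the coordinate functionals
  have hmapadd : ∀ (i : Fin n) (x y : X),
      B.det (Function.update e i (x + y)) =
        B.det (Function.update e i x) + B.det (Function.update e i y) := fun i x y =>
    AlternatingMap.map_update_add B.det e i x y
  let aL : Fin n → (X →ₗ[ℂ] ℂ) := fun i =>
    { toFun := fun x => B.det (Function.update e i x) / B.det e
      map_add' := fun x y => by
        show B.det (Function.update e i (x + y)) / B.det e = _
        rw [hmapadd]; ring
      map_smul' := fun c x => by
        show B.det (Function.update e i (c • x)) / B.det e = _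
        rw [RingHom.id_apply, AlternatingMap.map_update_smul]
        simp only [smul_eq_mul]; ring }
  have haLbound : ∀ (i : Fin n) (x : X), ‖aL i x‖ ≤ 1 * ‖x‖ := by
    intro i x
    have : ‖aL i x‖ = ‖B.det (Function.update e i x)‖ / M := by
      simp only [aL, LinearMap.coe_mk, AddHom.coe_mk, norm_div, hM]
    rw [this, one_mul, div_le_iff₀ hMpos]
    exact hbound i x
  let a : Fin n → (X →L[ℂ] ℂ) := fun i => LinearMap.mkContinuous (aL i) 1 (haLbound i)
  have hanorm : ∀ i, ‖a i‖ ≤ 1 := fun i =>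
    LinearMap.mkContinuous_norm_le (aL i) zero_le_one (haLbound i)
  have haval : ∀ i j, a i (e j) = if i = j then 1 else 0 := by
    intro i j
    rcases eq_or_ne i j with rfl | hij
    · simp only [if_pos rfl]
      show B.det (Function.update e i (e i)) / B.det e = 1
      rw [Function.update_eq_self, div_self hdetne]
    · simp only [if_neg hij]
      show B.det (Function.update e i (e j)) / B.det e = 0
      have : B.det (Function.update e i (e j)) = 0 := by
        refine B.det.map_eq_zero_of_eq _ (i := i) (j := j) ?_ hij
        rw [Function.update_self, Function.update_of_ne (Ne.symm hij)]
      rw [this, zero_div]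
  -- e is a basis
  have hunit : IsUnit (B.det e) := isUnit_iff_ne_zero.mpr hdetne
  obtain ⟨hli, hsp⟩ := (Module.Basis.is_basis_iff_det B).mpr hunit
  let E : Module.Basis (Fin n) ℂ X := Module.Basis.mk hli hsp.ge
  have hE : ⇑E = e := Module.Basis.coe_mk hli hsp.ge
  refine ⟨e, a, hesph, hanorm, ?_⟩
  have hg : (∑ i, ((a i : X →ₗ[ℂ] ℂ).smulRight (e i))) = LinearMap.id := by
    refine Module.Basis.ext E fun j => ?_
    simp only [LinearMap.sum_apply, LinearMap.smulRight_apply, LinearMap.id_apply, hE,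
      ContinuousLinearMap.coe_coe]
    rw [Finset.sum_eq_single j]
    · rw [haval j j, if_pos rfl, one_smul]
    · intro i _ hij
      rw [haval i j, if_neg hij, zero_smul]
    · intro h; exact absurd (Finset.mem_univ j) h
  intro x
  have := congrArg (fun f => f x) hg
  simpa using this

lemma my_trace_smulRight {X : Type*} [NormedAddCommGroup X] [NormedSpace ℂ X]
    [FiniteDimensional ℂ X] (a : X →L[ℂ] ℂ) (y : X) :
    LinearMap.trace ℂ X (a.smulRight y : X →L[ℂ] X).toLinearMap = a y := by
  classical
  let b := Module.finBasis ℂ X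
  rw [LinearMap.trace_eq_matrix_trace ℂ b, Matrix.trace]
  have hy : a y = ∑ i, b.repr y i * a (b i) := by
    conv_lhs => rw [← b.sum_repr y]
    rw [map_sum]; simp only [map_smul, smul_eq_mul]
  rw [hy]
  refine Finset.sum_congr rfl fun i _ => ?_
  simp [LinearMap.toMatrix_apply, Matrix.diag, mul_comm]

set_option maxHeartbeats 1000000 in
lemma my_lower (X : Type*) [NormedAddCommGroup X] [NormedSpace ℂ X] [CompleteSpace X]
    [FiniteDimensional ℂ X] (n : ℕ) (hdim : Module.finrank ℂ X = n)
    (a : ℕ → (X →L[ℂ] ℂ)) (y : ℕ → X)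
    (h : IsNuclearRep (ContinuousLinearMap.id ℂ X) a y) :
    (n : ℝ) ≤ ∑' k, ‖a k‖ * ‖y k‖ := by
  obtain ⟨hsum, hrep⟩ := h
  have hTnorm : ∀ k, ‖(a k).smulRight (y k)‖ = ‖a k‖ * ‖y k‖ := fun k =>
    ContinuousLinearMap.norm_smulRight_apply (a k) (y k)
  have hTsum : Summable (fun k => (a k).smulRight (y k) : ℕ → X →L[ℂ] X) := by
    refine Summable.of_norm ?_
    simpa only [hTnorm] using hsum
  obtain ⟨S, hS⟩ := hTsum
  have hSid : S = ContinuousLinearMap.id ℂ X := by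
    ext x
    have h1 : HasSum (fun k => ((a k).smulRight (y k)) x) (S x) :=
      hS.mapL (ContinuousLinearMap.apply ℂ X x)
    have h2 : HasSum (fun k => ((a k).smulRight (y k)) x) x := by
      simpa only [ContinuousLinearMap.smulRight_apply, ContinuousLinearMap.id_apply] using hrep x
    simpa using h1.unique h2
  -- trace functional
  let tr : (X →L[ℂ] X) →ₗ[ℂ] ℂ := (LinearMap.trace ℂ X).comp (ContinuousLinearMap.coeLM ℂ)
  have htr : HasSum (fun k => tr ((a k).smulRight (y k))) (tr S) :=
    hS.map tr.toAddMonoidHom tr.continuous_of_finiteDimensional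
  have htrT : ∀ k, tr ((a k).smulRight (y k)) = a k (y k) := fun k =>
    my_trace_smulRight (a k) (y k)
  have htrS : tr S = (n : ℂ) := by
    rw [hSid]
    show LinearMap.trace ℂ X (ContinuousLinearMap.id ℂ X : X →ₗ[ℂ] X) = (n : ℂ)
    rw [ContinuousLinearMap.coe_id, LinearMap.trace_id, hdim]
  have hfin : HasSum (fun k => a k (y k)) (n : ℂ) := by
    rw [← htrS]; simpa only [htrT] using htr
  have hsummable' : Summable (fun k => ‖a k (y k)‖) := by
    refine Summable.of_nonneg_of_le (fun k => norm_nonneg _) (fun k => ?_) hsum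
    exact (a k).le_opNorm (y k)
  calc (n : ℝ) = ‖(n : ℂ)‖ := by simp
    _ = ‖∑' k, a k (y k)‖ := by rw [hfin.tsum_eq]
    _ ≤ ∑' k, ‖a k (y k)‖ := norm_tsum_le_tsum_norm hsummable'
    _ ≤ ∑' k, ‖a k‖ * ‖y k‖ :=
        hsummable'.tsum_le_tsum (fun k => (a k).le_opNorm (y k)) hsum

lemma my_exists_rep (X : Type*) [NormedAddCommGroup X] [NormedSpace ℂ X]
    [FiniteDimensional ℂ X] (n : ℕ) (hdim : Module.finrank ℂ X = n) :
    ∃ (a : ℕ → (X →L[ℂ] ℂ)) (y : ℕ → X),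
      IsNuclearRep (ContinuousLinearMap.id ℂ X) a y ∧ (∑' k, ‖a k‖ * ‖y k‖) ≤ n := by
  classical
  rcases Nat.eq_zero_or_pos n with rfl | hn
  · have : Subsingleton X := by
      rw [← Module.finrank_zero_iff (R := ℂ)]; exact hdim
    refine ⟨fun _ => 0, fun _ => 0, ⟨?_, ?_⟩, ?_⟩
    · simpa using summable_zero
    · intro x
      have hx : x = 0 := Subsingleton.elim x 0
      simpa [hx] using hasSum_zero
    · simp
  · obtain ⟨e, a, hesph, hanorm, hrep⟩ := my_auerbach X n hn hdim
    set aa : ℕ → (X →L[ℂ] ℂ) := fun k => if h : k < n then a ⟨k, h⟩ else 0 with haa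
    set yy : ℕ → X := fun k => if h : k < n then e ⟨k, h⟩ else 0 with hyy
    have hvanish : ∀ k ∉ Finset.range n, ‖aa k‖ * ‖yy k‖ = 0 := by
      intro k hk
      rw [Finset.mem_range] at hk
      simp [haa, hyy, dif_neg hk]
    refine ⟨aa, yy, ⟨summable_of_ne_finset_zero hvanish, ?_⟩, ?_⟩
    · intro x
      have hvan : ∀ k ∉ Finset.range n, aa k x • yy k = 0 := by
        intro k hk
        rw [Finset.mem_range] at hk
        simp [haa, hyy, dif_neg hk]
      have hsum : ∑ k ∈ Finset.range n, aa k x • yy k = x := by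
        rw [← Fin.sum_univ_eq_sum_range (fun k => aa k x • yy k) n]
        have h1 : ∀ i : Fin n, aa (i : ℕ) x • yy (i : ℕ) = a i x • e i := by
          intro i; simp [haa, hyy, dif_pos i.isLt]
        rw [Finset.sum_congr rfl fun i _ => h1 i, hrep x]
      simpa [hsum] using hasSum_sum_of_ne_finset_zero hvan
    · rw [tsum_eq_sum hvanish]
      calc ∑ k ∈ Finset.range n, ‖aa k‖ * ‖yy k‖
          ≤ ∑ _k ∈ Finset.range n, 1 := by
            refine Finset.sum_le_sum fun k hk => ?_
            rw [Finset.mem_range] at hk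
            simp only [haa, hyy, dif_pos hk]
            rw [hesph ⟨k, hk⟩, mul_one]
            exact hanorm ⟨k, hk⟩
        _ = n := by simp

theorem stmt0 (X : Type*) [NormedAddCommGroup X] [NormedSpace ℂ X] [CompleteSpace X]
    [FiniteDimensional ℂ X] (n : ℕ) (hdim : Module.finrank ℂ X = n) :
    IsNuclear (ContinuousLinearMap.id ℂ X) ∧
      nuclearNorm (ContinuousLinearMap.id ℂ X) = n := by
  obtain ⟨a, y, hrep, hle⟩ := my_exists_rep X n hdim
  have hlow : ∀ c ∈ {c : ℝ | ∃ a y, IsNuclearRep (ContinuousLinearMap.id ℂ X) a y ∧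
      c = ∑' k, ‖a k‖ * ‖y k‖}, (n : ℝ) ≤ c := by
    rintro c ⟨a', y', hrep', rfl⟩
    exact my_lower X n hdim a' y' hrep'
  have hmem : (n : ℝ) ∈ {c : ℝ | ∃ a y, IsNuclearRep (ContinuousLinearMap.id ℂ X) a y ∧
      c = ∑' k, ‖a k‖ * ‖y k‖} := by
    refine ⟨a, y, hrep, ?_⟩
    exact le_antisymm (my_lower X n hdim a y hrep) hle
  refine ⟨⟨a, y, hrep⟩, ?_⟩
  exact le_antisymm (csInf_le ⟨(n : ℝ), hlow⟩ hmem) (le_csInf ⟨(n : ℝ), hmem⟩ hlow)
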